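/- Let X be a Banach space. If there exists i ≥ 0 such that Ker(π_i*) = {0}, then Ker(π_n*) = {0} for all n ≥ 0. Here π_k : X^{*k} → X^{*(k+2)} is the canonical embedding and π_k* : X^{*(k+3)} → X^{*(k+1)} its adjoint. -/

import Mathlib

open NormedSpace

noncomputable section

set_option maxHeartbeats 1000000

/-- The adjoint (transpose) of a continuous linear map between normed spaces:
`(adjointMap f) g = g ∘ f`. -/
def adjointMap {X Y : Type*} [SeminormedAddCommGroup X] [NormedSpace ℝ X]
    [SeminormedAddCommGroup Y] [NormedSpace ℝ Y] (f : X →L[ℝ] Y) :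
    StrongDual ℝ Y →L[ℝ] StrongDual ℝ X :=
  (ContinuousLinearMap.compL ℝ X Y ℝ).flip f

/-- A bundled Banach space over `ℝ`. -/
structure BanachPkg where
  carrier : Type
  [grp : NormedAddCommGroup carrier]
  [mod : NormedSpace ℝ carrier]
  [comp : CompleteSpace carrier]

attribute [instance] BanachPkg.grp BanachPkg.mod BanachPkg.comp

/-- The dual of a bundled Banach space. -/
def BanachPkg.dual (P : BanachPkg) : BanachPkg := ⟨StrongDual ℝ P.carrier⟩

/-- `iterDual P n` is the `n`-th iterated dual `X^{*n}` of `X = P.carrier`. -/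
def iterDual (P : BanachPkg) : ℕ → BanachPkg
  | 0 => P
  | n + 1 => (iterDual P n).dual

/-- `π_n : X^{*n} → X^{*(n+2)}`, the canonical evaluation map. -/
def piMap (P : BanachPkg) (n : ℕ) :
    (iterDual P n).carrier →L[ℝ] (iterDual P (n + 2)).carrier :=
  inclusionInDoubleDual ℝ (iterDual P n).carrier

/-- `π_n* : X^{*(n+3)} → X^{*(n+1)}`, the adjoint of `π_n`. -/
def piAdj (P : BanachPkg) (n : ℕ) :
    (iterDual P (n + 3)).carrier →L[ℝ] (iterDual P (n + 1)).carrier :=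
  adjointMap (piMap P n)

section Aux

variable {X : Type*} [NormedAddCommGroup X] [NormedSpace ℝ X]

lemma adjointMap_apply {Y : Type*} [NormedAddCommGroup Y] [NormedSpace ℝ Y]
    (f : X →L[ℝ] Y) (g : StrongDual ℝ Y) (x : X) : adjointMap f g x = g (f x) := rfl

/-- If the adjoint of the canonical embedding is injective, then the embedding is
surjective (i.e. the space is reflexive). Uses Hahn–Banach separation. -/
lemma surj_of_ker_adjoint [CompleteSpace X]
    (h : LinearMap.ker (adjointMap (Y := StrongDual ℝ (StrongDual ℝ X)) (inclusionInDoubleDual ℝ X)).toLinearMap = ⊥) :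
    Function.Surjective (inclusionInDoubleDual ℝ X) := by
  intro Φ
  by_contra hΦ
  set S : Submodule ℝ (StrongDual ℝ (StrongDual ℝ X)) :=
    LinearMap.range (inclusionInDoubleDual ℝ X).toLinearMap with hS
  have hΦS : Φ ∉ (S : Set (StrongDual ℝ (StrongDual ℝ X))) := by
    intro hmem
    obtain ⟨x, hx⟩ := hmem
    exact hΦ ⟨x, hx⟩
  have hSclosed : IsClosed (S : Set (StrongDual ℝ (StrongDual ℝ X))) := by
    have hiso : Isometry (inclusionInDoubleDual ℝ X) :=
      (inclusionInDoubleDualLi ℝ (E := X)).isometry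
    have : (S : Set (StrongDual ℝ (StrongDual ℝ X))) =
        Set.range (inclusionInDoubleDual ℝ X) := by
      ext y; simp [hS, LinearMap.mem_range, Set.mem_range]
    rw [this]
    exact hiso.isClosedEmbedding.isClosed_range
  obtain ⟨f, u, hfu, huΦ⟩ :=
    geometric_hahn_banach_closed_point S.convex hSclosed hΦS
  -- `f` vanishes on `S`
  have hf0 : ∀ y ∈ S, f y = 0 := by
    intro y hy
    by_contra hne
    have h1 : ∀ t : ℝ, f (t • y) < u := fun t => hfu _ (S.smul_mem t hy)
    have h2 : ∀ t : ℝ, t * f y < u := by simpa using h1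
    have := h2 (u / f y)
    rw [div_mul_cancel₀ _ hne] at this
    exact lt_irrefl u this
  have hker : f ∈ LinearMap.ker (adjointMap (Y := StrongDual ℝ (StrongDual ℝ X)) (inclusionInDoubleDual ℝ X)).toLinearMap := by
    rw [LinearMap.mem_ker]
    ext x
    exact hf0 _ ⟨x, rfl⟩
  rw [h, Submodule.mem_bot] at hker
  have h0 : f Φ = 0 := by rw [hker]; rfl
  have hu0 : (0 : ℝ) < u := by
    have := hfu 0 S.zero_mem
    simpa using this
  rw [h0] at huΦ
  linarith

/-- If `X` is reflexive then so is `X*`. -/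
lemma surj_dual_of_surj
    (h : Function.Surjective (inclusionInDoubleDual ℝ X)) :
    Function.Surjective (inclusionInDoubleDual ℝ (StrongDual ℝ X)) := by
  intro F
  refine ⟨(adjointMap (inclusionInDoubleDual ℝ X)) F, ?_⟩
  ext Φ
  obtain ⟨x, rfl⟩ := h Φ
  rfl

/-- If `X*` is reflexive then the adjoint of the canonical embedding of `X` is
injective. -/
lemma ker_adjoint_of_surj_dual
    (h : Function.Surjective (inclusionInDoubleDual ℝ (StrongDual ℝ X))) :
    LinearMap.ker (adjointMap (Y := StrongDual ℝ (StrongDual ℝ X)) (inclusionInDoubleDual ℝ X)).toLinearMap = ⊥ := by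
  rw [Submodule.eq_bot_iff]
  intro f hf
  rw [LinearMap.mem_ker] at hf
  obtain ⟨g, rfl⟩ := h f
  have hg : g = 0 := by
    ext x
    have := congrArg (fun φ => φ x) hf
    exact this
  rw [hg]
  simp

end Aux

/-- if `Ker(π_i*) = {0}` for some `i ≥ 0`, then
`Ker(π_n*) = {0}` for every `n ≥ 0`. -/
theorem ker_adjoint_bot_propagates (P : BanachPkg)
    (h : ∃ i : ℕ, LinearMap.ker (piAdj P i).toLinearMap = ⊥) :
    ∀ n : ℕ, LinearMap.ker (piAdj P n).toLinearMap = ⊥ := by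
  obtain ⟨i, hi⟩ := h
  -- Q n : level-n canonical embedding is surjective
  have hQi : Function.Surjective (inclusionInDoubleDual ℝ (iterDual P i).carrier) :=
    surj_of_ker_adjoint hi
  have step_up : ∀ n, Function.Surjective (inclusionInDoubleDual ℝ (iterDual P n).carrier) →
      Function.Surjective (inclusionInDoubleDual ℝ (iterDual P (n + 1)).carrier) :=
    fun n hn => surj_dual_of_surj hn
  have step_down : ∀ n, Function.Surjective
      (inclusionInDoubleDual ℝ (iterDual P (n + 1)).carrier) →
      Function.Surjective (inclusionInDoubleDual ℝ (iterDual P n).carrier) :=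
    fun n hn => surj_of_ker_adjoint (ker_adjoint_of_surj_dual hn)
  have hQ : ∀ n, Function.Surjective (inclusionInDoubleDual ℝ (iterDual P n).carrier) := by
    have up : ∀ n, Function.Surjective
        (inclusionInDoubleDual ℝ (iterDual P (i + n)).carrier) := by
      intro n
      induction n with
      | zero => exact hQi
      | succ k ih => exact step_up _ ih
    intro n
    rcases le_or_gt i n with hle | hlt
    · obtain ⟨k, rfl⟩ := Nat.exists_eq_add_of_le hle
      exact up k
    · -- descend from i to n
      have down : ∀ k, Function.Surjective
          (inclusionInDoubleDual ℝ (iterDual P (i - k)).carrier) := by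
        intro k
        induction k with
        | zero => simpa using hQi
        | succ m ih =>
          rcases le_or_gt i m with him | him
          · have h1 : i - (m + 1) = i - m := by omega
            rw [h1]; exact ih
          · have h1 : i - m = (i - (m + 1)) + 1 := by omega
            rw [h1] at ih
            exact step_down _ ih
      have := down (i - n)
      rwa [Nat.sub_sub_self hlt.le] at this
  intro n
  exact ker_adjoint_of_surj_dual (hQ (n + 1))
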